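/- Let k ≥ 1 and define w_n by w_0 = ε, w_{n+1} = (w_n δ_{n+1})^E with δ_1 = ⋯ = δ_k = 0 and δ_{k+1} = 1. Then w_{k+1} = (01)^k 10 (01)^k, and Γ = {2k-2, 2k, 2k+1} is a string attractor of w_{k+1}. -/

import Mathlib

def occursAt (f w : List Bool) (i : ℕ) : Prop :=
  i + f.length ≤ w.length ∧ (w.drop i).take f.length = f

def IsAttractor (w : List Bool) (Γ : Finset ℕ) : Prop :=
  (∀ γ ∈ Γ, γ < w.length) ∧
  ∀ f : List Bool, f ≠ [] → f <:+: w →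
    ∃ i, occursAt f w i ∧ ∃ γ ∈ Γ, i ≤ γ ∧ γ < i + f.length

def Emap (w : List Bool) : List Bool := (w.reverse).map (fun b => !b)

def IsPal (w : List Bool) : Prop := w.reverse = w

def IsAntipal (w : List Bool) : Prop := Emap w = w

def IsPalClosure (w p : List Bool) : Prop :=
  IsPal p ∧ w <+: p ∧ ∀ q, IsPal q → w <+: q → p.length ≤ q.length

def IsAntipalClosure (w p : List Bool) : Prop :=
  IsAntipal p ∧ w <+: p ∧ ∀ q, IsAntipal q → w <+: q → p.length ≤ q.length


lemma antipal_getElem {p : List Bool} (h : IsAntipal p) {i : ℕ} (hi : i < p.length) :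
    p[i] = ! p[p.length - 1 - i]'(by omega) := by
  have h1 : (Emap p)[i]'(by simp [Emap]; omega) = p[i] := by
    exact List.getElem_of_eq h _
  rw [← h1]
  simp only [Emap, List.getElem_map, List.getElem_reverse]

lemma antipal_even {p : List Bool} (h : IsAntipal p) : p.length % 2 = 0 := by
  by_contra hodd
  have hlt : p.length / 2 < p.length := by omega
  have h3 := antipal_getElem h hlt
  simp only [show p.length - 1 - p.length / 2 = p.length / 2 by omega] at h3
  simp at h3

def pb (i : ℕ) : Bool := decide (i % 2 = 1)
def Bw (n : ℕ) : List Bool := (List.range (2*n)).map pb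
def chi (k i : ℕ) : Bool := if i = 2*k then true else if i = 2*k+1 then false else pb i
def Wl (k : ℕ) : List Bool := (List.range (4*k+2)).map (chi k)

lemma Bw_length (n : ℕ) : (Bw n).length = 2*n := by simp [Bw]
lemma Wl_length (k : ℕ) : (Wl k).length = 4*k+2 := by simp [Wl]

lemma Bw_getElem (n i : ℕ) (hi : i < 2*n) : (Bw n)[i]'(by simp [Bw]; omega) = pb i := by
  simp [Bw]

lemma Wl_getElem (k i : ℕ) (hi : i < 4*k+2) : (Wl k)[i]'(by simp [Wl]; omega) = chi k i := by
  simp [Wl]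

lemma Wc_eq (k : ℕ) : Bw k ++ [true, false] ++ Bw k = Wl k := by
  apply List.ext_getElem
  · simp [Bw, Wl]; omega
  · intro i h1 h2
    rw [Wl_getElem k i (by rwa [Wl_length] at h2)]
    rcases Nat.lt_or_ge i (2*k) with hc | hc
    · rw [List.getElem_append_left (by simp [Bw_length]; try omega),
        List.getElem_append_left (by simp [Bw_length]; try omega), Bw_getElem k i hc]
      simp [chi, show i ≠ 2*k by omega, show i ≠ 2*k+1 by omega]
    · rcases Nat.lt_or_ge i (2*k+2) with hc2 | hc2
      · rw [List.getElem_append_left (by simp [Bw_length]; try omega),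
          List.getElem_append_right (by simp [Bw_length]; try omega)]
        simp only [Bw_length]
        have hd : i = 2*k ∨ i = 2*k+1 := by omega
        rcases hd with hd | hd <;> subst hd <;>
          simp [chi, Nat.sub_self, show 2*k+1-2*k = 1 by omega]
      · rw [List.getElem_append_right (by simp [Bw_length]; try omega)]
        have h3 : i - (Bw k ++ [true,false]).length = i - (2*k+2) := by simp [Bw]
        have h4 : i - (2*k+2) < 2*k := by rw [Wl_length] at h2; omega
        simp only [h3]
        rw [Bw_getElem k _ h4]
        have : i ≠ 2*k ∧ i ≠ 2*k+1 := by omega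
        simp only [chi, pb, if_neg this.1, if_neg this.2, decide_eq_decide]
        omega

lemma ext_bool (p q : List Bool) (hl : p.length = q.length)
    (h : ∀ i (h1 : i < p.length), p[i] = q[i]'(hl ▸ h1)) : p = q :=
  List.ext_getElem hl (fun i h1 _ => h i h1)

lemma antipal_of_getElem {p : List Bool}
    (h : ∀ i (hi : i < p.length), p[i] = ! p[p.length - 1 - i]'(by omega)) : IsAntipal p := by
  refine ext_bool _ _ (by simp [Emap]) ?_
  intro i h1
  have h1' : i < p.length := by simpa [Emap] using h1
  simp only [Emap, List.getElem_map, List.getElem_reverse]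
  rw [h i h1']

lemma antipal_Bw (n : ℕ) : IsAntipal (Bw n) := by
  apply antipal_of_getElem
  intro i hi
  rw [Bw_length] at hi
  simp only [Bw_length]
  rw [Bw_getElem n i hi, Bw_getElem n _ (by omega : 2*n-1-i < 2*n)]
  simp only [pb, ← decide_not, decide_eq_decide]
  omega

lemma antipal_Wl (k : ℕ) : IsAntipal (Wl k) := by
  apply antipal_of_getElem
  intro i hi
  rw [Wl_length] at hi
  simp only [Wl_length]
  rw [Wl_getElem k i hi, Wl_getElem k _ (by omega : 4*k+2-1-i < 4*k+2)]
  unfold chi pb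
  rcases Nat.lt_or_ge i (2*k) with h1 | h1
  · rw [if_neg (by omega), if_neg (by omega), if_neg (by omega), if_neg (by omega)]
    simp only [← decide_not, decide_eq_decide]; omega
  · rcases Nat.lt_or_ge i (2*k+2) with h2 | h2
    · have : i = 2*k ∨ i = 2*k+1 := by omega
      rcases this with h3 | h3 <;> subst h3
      · simp only [show 4*k+2-1-2*k = 2*k+1 by omega]
        simp
      · simp only [show 4*k+2-1-(2*k+1) = 2*k by omega]
        simp
    · rw [if_neg (by omega), if_neg (by omega), if_neg (by omega), if_neg (by omega)]
      simp only [← decide_not, decide_eq_decide]; omega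


lemma occursAt_of (f w : List Bool) (j : ℕ) (h1 : j + f.length ≤ w.length)
    (h2 : ∀ t (ht : t < f.length), f[t] = w[j+t]'(by omega)) : occursAt f w j := by
  refine ⟨h1, ext_bool _ _ (by simp; omega) ?_⟩
  intro t ht
  have ht' : t < f.length := (by simpa using ht : _ ∧ _).1
  rw [List.getElem_take, List.getElem_drop, h2 t ht']

lemma occursAt_elim (f w : List Bool) (j : ℕ) (h : occursAt f w j) :
    ∀ t (ht : t < f.length), f[t] = w[j+t]'(by have := h.1; omega) := by
  intro t ht
  have h3 := List.getElem_of_eq h.2 (i := t) (by simp; exact ⟨ht, by have := h.1; omega⟩)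
  rw [← h3, List.getElem_take, List.getElem_drop]

lemma prefix_getElem {u p : List Bool} (h : u <+: p) {i : ℕ} (hi : i < u.length) :
    p[i]'(by have := h.length_le; omega) = u[i] := by
  obtain ⟨t, rfl⟩ := h
  exact List.getElem_append_left hi


lemma Bw_succ (n : ℕ) : Bw (n+1) = Bw n ++ [false, true] := by
  simp only [Bw, show 2*(n+1) = 2*n+1+1 by ring, List.range_succ, List.map_append,
    List.append_assoc]
  congr 1
  simp [pb, Nat.mul_mod_right, Nat.add_mod]

lemma AB (n : ℕ) : (List.replicate n [false, true]).flatten = Bw n := by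
  induction n with
  | zero => simp [Bw]
  | succ n ih =>
    rw [List.replicate_succ', List.flatten_append, ih, Bw_succ]
    simp

lemma pref0_getElem (n i : ℕ) (hi : i < 2*n+1) :
    (Bw n ++ [false])[i]'(by simp [Bw_length]; try omega) = pb i := by
  rcases Nat.lt_or_ge i (2*n) with h | h
  · rw [List.getElem_append_left (by simp [Bw_length]; try omega), Bw_getElem n i h]
  · have : i = 2*n := by omega
    subst this
    rw [List.getElem_append_right (by simp [Bw_length]; try omega)]
    simp [Bw_length, pb, Nat.mul_mod_right]

lemma pref1_getElem (n i : ℕ) (hi : i < 2*n+1) :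
    (Bw n ++ [true])[i]'(by simp [Bw_length]; try omega) = if i = 2*n then true else pb i := by
  rcases Nat.lt_or_ge i (2*n) with h | h
  · rw [List.getElem_append_left (by simp [Bw_length]; try omega), Bw_getElem n i h,
      if_neg (by omega)]
  · have : i = 2*n := by omega
    subst this
    rw [List.getElem_append_right (by simp [Bw_length]; try omega)]
    simp [Bw_length]

lemma step0 (n : ℕ) (p : List Bool) (h : IsAntipalClosure (Bw n ++ [false]) p) :
    p = Bw (n+1) := by
  obtain ⟨hap, hpre, hmin⟩ := h
  have hub : p.length ≤ 2*n+2 := by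
    have := hmin (Bw (n+1)) (antipal_Bw _)
      (by rw [Bw_succ]; exact ⟨[true], by simp⟩)
    simp only [Bw_length] at this; omega
  have hlb : 2*n+1 ≤ p.length := by
    have := hpre.length_le
    simp only [List.length_append, Bw_length, List.length_singleton] at this
    omega
  have heven := antipal_even hap
  have hlen : p.length = 2*n+2 := by omega
  refine ext_bool _ _ (by rw [hlen, Bw_length]; ring) ?_
  intro i h1
  rw [hlen] at h1
  rw [Bw_getElem (n+1) i (by omega)]
  rcases Nat.lt_or_ge i (2*n+1) with hc | hc
  · rw [prefix_getElem hpre (by simp [Bw_length]; try omega), pref0_getElem n i hc]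
  · have : i = 2*n+1 := by omega
    subst this
    have e1 := antipal_getElem hap (show 2*n+1 < p.length by omega)
    simp only [hlen, show 2*n+2-1-(2*n+1) = 0 by omega] at e1
    have e2 : p[0]'(by omega) = false := by
      rw [prefix_getElem hpre (by simp [Bw_length]), pref0_getElem n 0 (by omega)]
      simp [pb]
    rw [e1, e2]
    simp [pb, Nat.add_mod, Nat.mul_mod_right]

lemma step1 (k : ℕ) (hk : 1 ≤ k) (p : List Bool)
    (h : IsAntipalClosure (Bw k ++ [true]) p) : p = Wl k := by
  obtain ⟨hap, hpre, hmin⟩ := h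
  have hub : p.length ≤ 4*k+2 := by
    have := hmin (Wl k) (antipal_Wl _)
      (by rw [← Wc_eq]; exact ⟨[false] ++ Bw k, by simp⟩)
    simpa [Wl_length] using this
  have hlb : 2*k+1 ≤ p.length := by
    have := hpre.length_le
    simp only [List.length_append, Bw_length, List.length_singleton] at this
    omega
  have heven := antipal_even hap
  have h2k : p[2*k]'(by omega) = true := by
    rw [prefix_getElem hpre (by simp [Bw_length]; try omega), pref1_getElem k (2*k) (by omega)]
    simp
  have hlen : p.length = 4*k+2 := by
    by_contra hne
    have hm : p.length ≤ 4*k := by omega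
    have e1 := antipal_getElem hap (show 2*k < p.length by omega)
    have hj1 : p.length - 1 - 2*k < 2*k := by omega
    have hj2 : (p.length - 1 - 2*k) % 2 = 1 := by omega
    have e2 : p[p.length - 1 - 2*k]'(by omega) = true := by
      rw [prefix_getElem hpre (by simp [Bw_length]; try omega),
        pref1_getElem k _ (by omega), if_neg (by omega)]
      simp [pb, hj2]
    rw [h2k, e2] at e1
    simp at e1
  refine ext_bool _ _ (by rw [hlen, Wl_length]) ?_
  intro i h1
  rw [hlen] at h1
  rw [Wl_getElem k i (by omega)]
  rcases Nat.lt_or_ge i (2*k+1) with hc | hc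
  · rw [prefix_getElem hpre (by simp [Bw_length]; try omega), pref1_getElem k i hc]
    simp only [chi]
    rw [if_neg (show i ≠ 2*k+1 by omega)]
  · -- i ≥ 2k+1 : use antipalindromy
    have hi' : 4*k+1-i < 2*k+1 := by omega
    have e1 := antipal_getElem hap (show 4*k+1-i < p.length by omega)
    simp only [hlen, show 4*k+2-1-(4*k+1-i) = i by omega] at e1
    have e2 : p[4*k+1-i]'(by omega) =
        if 4*k+1-i = 2*k then true else pb (4*k+1-i) := by
      rw [prefix_getElem hpre (by simp [Bw_length]; try omega), pref1_getElem k _ hi']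
    have e3 : p[i]'(by omega) = ! p[4*k+1-i]'(by omega) := by
      rw [e1]; simp
    rw [e3, e2]
    rcases Nat.lt_or_ge i (2*k+2) with hd | hd
    · have : i = 2*k+1 := by omega
      subst this
      rw [if_pos (by omega)]
      simp [chi, show ¬(2*k+1 = 2*k) by omega]
    · rw [if_neg (by omega)]
      simp only [chi, pb, if_neg (show i ≠ 2*k by omega),
        if_neg (show i ≠ 2*k+1 by omega), ← decide_not, decide_eq_decide]
      omega


lemma place (k l i0 : ℕ) (hk : 1 ≤ k) (f : List Bool) (hlen : f.length = l) (hl : 1 ≤ l)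
    (hb : l ≤ 2*k) (hp : l = 2*k → i0 % 2 = 0)
    (halt : ∀ t (ht : t < l), f[t]'(by omega) = pb (i0+t)) :
    ∃ j, occursAt f (Wl k) j ∧
      ∃ γ ∈ ({2*k-2, 2*k, 2*k+1} : Finset ℕ), j ≤ γ ∧ γ < j + f.length := by
  rcases Nat.lt_or_ge l 2 with hl1 | hl2
  · -- l = 1
    have hl0 : l = 1 := by omega
    subst hl0
    have h0 := halt 0 (by omega)
    rcases hb0 : pb (i0 + 0) with hb0' | hb0'
    · -- single letter false, place at 2k-2
      refine ⟨2*k-2, occursAt_of _ _ _ (by rw [hlen, Wl_length]; omega) ?_,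
        2*k-2, by simp, by omega, by omega⟩
      intro t ht
      rw [hlen] at ht
      have ht0 : t = 0 := by omega
      subst ht0
      rw [h0, hb0, Wl_getElem k _ (by omega)]
      simp only [chi, pb, if_neg (show ¬(2*k-2+0 = 2*k) by omega),
        if_neg (show ¬(2*k-2+0 = 2*k+1) by omega)]
      simp
      omega
    · -- single letter true, place at 2k
      refine ⟨2*k, occursAt_of _ _ _ (by rw [hlen, Wl_length]; omega) ?_,
        2*k, by simp, by omega, by omega⟩
      intro t ht
      rw [hlen] at ht
      have ht0 : t = 0 := by omega
      subst ht0
      rw [h0, hb0, Wl_getElem k _ (by omega)]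
      simp [chi]
  · -- l ≥ 2
    set j := if (2*k - l) % 2 = i0 % 2 then 2*k - l else 2*k-1-l with hj
    have hle : (2*k - l) % 2 ≠ i0 % 2 → l ≤ 2*k - 1 := by
      intro hne
      rcases Nat.lt_or_ge l (2*k) with h | h
      · omega
      · exfalso; have hl2k : l = 2*k := by omega
        have := hp hl2k; omega
    have hj_par : j % 2 = i0 % 2 := by
      rw [hj]; split_ifs with hc
      · exact hc
      · have := hle hc; omega
    have hj1 : j ≤ 2*k-2 := by
      rw [hj]; split_ifs with hc
      · omega
      · omega
    have hj3 : j + l ≤ 2*k := by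
      rw [hj]; split_ifs with hc
      · omega
      · omega
    have hj2 : 2*k-2 < j + l := by
      rw [hj]; split_ifs with hc
      · omega
      · have := hle hc; omega
    refine ⟨j, occursAt_of _ _ _ (by rw [hlen, Wl_length]; omega) ?_,
      2*k-2, by simp, hj1, by omega⟩
    intro t ht
    rw [hlen] at ht
    rw [halt t ht, Wl_getElem k _ (by omega)]
    simp only [chi, pb, if_neg (show ¬(j+t = 2*k) by omega),
      if_neg (show ¬(j+t = 2*k+1) by omega), decide_eq_decide]
    omega

lemma attractor (k : ℕ) (hk : 1 ≤ k) :
    IsAttractor (Wl k) ({2*k-2, 2*k, 2*k+1} : Finset ℕ) := by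
  constructor
  · intro γ hγ
    rw [Wl_length]
    simp only [Finset.mem_insert, Finset.mem_singleton] at hγ
    rcases hγ with h | h | h <;> omega
  · intro f hne hinf
    obtain ⟨s, t, hst⟩ := hinf
    have hl : 1 ≤ f.length := List.length_pos_iff.2 hne
    have hocc : occursAt f (Wl k) s.length := by
      constructor
      · rw [← hst]; simp; try omega
      · rw [← hst, List.append_assoc, List.drop_left, List.take_left]
    have hbound : s.length + f.length ≤ 4*k+2 := by
      have := hocc.1; rwa [Wl_length] at this
    have hchar : ∀ u (hu : u < f.length), f[u] = chi k (s.length + u) := by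
      intro u hu
      rw [occursAt_elim _ _ _ hocc u hu, Wl_getElem k _ (by omega)]
    set i0 := s.length
    by_cases c1 : i0 ≤ 2*k-2 ∧ 2*k-2 < i0 + f.length
    · exact ⟨i0, hocc, 2*k-2, by simp, c1.1, c1.2⟩
    by_cases c2 : i0 ≤ 2*k ∧ 2*k < i0 + f.length
    · exact ⟨i0, hocc, 2*k, by simp, c2.1, c2.2⟩
    by_cases c3 : i0 ≤ 2*k+1 ∧ 2*k+1 < i0 + f.length
    · exact ⟨i0, hocc, 2*k+1, by simp, c3.1, c3.2⟩
    have hcase : (i0 + f.length ≤ 2*k-2) ∨ (i0 = 2*k-1 ∧ f.length = 1) ∨ (2*k+2 ≤ i0) := by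
      omega
    rcases hcase with hc | ⟨hc1, hc2⟩ | hc
    · refine place k f.length i0 hk f rfl hl (by omega) (by omega) ?_
      intro u hu
      rw [hchar u hu]
      simp only [chi, if_neg (show ¬(i0+u = 2*k) by omega),
        if_neg (show ¬(i0+u = 2*k+1) by omega)]
    · refine place k f.length i0 hk f rfl hl (by omega) (by omega) ?_
      intro u hu
      rw [hchar u hu]
      simp only [chi, if_neg (show ¬(i0+u = 2*k) by omega),
        if_neg (show ¬(i0+u = 2*k+1) by omega)]
    · refine place k f.length i0 hk f rfl hl (by omega) (by omega) ?_
      intro u hu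
      rw [hchar u hu]
      simp only [chi, if_neg (show ¬(i0+u = 2*k) by omega),
        if_neg (show ¬(i0+u = 2*k+1) by omega)]

theorem stmt_12 (k : ℕ) (hk : 1 ≤ k) (w : ℕ → List Bool)
    (h0 : w 0 = [])
    (hclos0 : ∀ n < k, IsAntipalClosure (w n ++ [false]) (w (n + 1)))
    (hclos1 : IsAntipalClosure (w k ++ [true]) (w (k + 1))) :
    w (k + 1) =
      (List.replicate k [false, true]).flatten ++ [true, false] ++
        (List.replicate k [false, true]).flatten ∧
    IsAttractor (w (k + 1)) ({2 * k - 2, 2 * k, 2 * k + 1} : Finset ℕ) := by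
  have key : ∀ n, n ≤ k → w n = Bw n := by
    intro n
    induction n with
    | zero => intro _; rw [h0]; simp [Bw]
    | succ n ih =>
      intro hnk
      have hn : n < k := hnk
      have hc := hclos0 n hn
      rw [ih (Nat.le_of_lt hn)] at hc
      exact step0 n _ hc
  have hc1 := hclos1
  rw [key k le_rfl] at hc1
  have hwk : w (k+1) = Wl k := step1 k hk _ hc1
  constructor
  · rw [hwk, AB, Wc_eq]
  · rw [hwk]
    exact attractor k hk
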